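/- Let Δ ⊆ M denote the (finite) set of roots, n := dim M the rank, and fix any root θ with coroot θ∨. Then n · #{α ∈ Δ : ⟨α, θ∨⟩ = 1} = 2·|Δ| − 4n and n · #{α ∈ Δ : ⟨α, θ∨⟩ = 0} = n·|Δ| − 4·|Δ| + 6n. Equivalently, writing |Δ| = n·h∨ with h∨ the (dual) Coxeter number, the number of roots α with ⟨α,θ∨⟩ = 1 is 2(h∨−2) and the number with ⟨α,θ∨⟩ = 0 is n·h∨ − 4h∨ + 6. (Proposition 7.1(b) of the paper: dim g₁ = 2(h∨−2) and dim g₀ = n(h∨+1) − 4h∨ + 6, the latter including the n-dimensional Cartan subalgebra.) -/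

import Mathlib

open RootPairing

section Aux

variable {ι M N : Type*} [Fintype ι]
    [AddCommGroup M] [Module ℝ M] [AddCommGroup N] [Module ℝ N]
    (P : RootPairing ι ℝ M N)

lemma aux_rootForm_coroot' (i : ι) (x : M) :
    P.RootForm (P.root i) (P.root i) * P.coroot' i x = 2 * P.RootForm (P.root i) x := by
  have h := congrArg (fun n => P.toLinearMap x n) (P.rootForm_self_smul_coroot i)
  simp only [map_smul, map_nsmul, smul_eq_mul, nsmul_eq_mul, Nat.cast_ofNat,
    Polarization_apply, map_sum, rootForm_apply_apply] at h
  rw [rootForm_apply_apply, rootForm_apply_apply]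
  convert h using 2 <;> rfl


lemma aux_length_eq (hsl : ∀ k l : ι, P.pairing k l = P.pairing l k)
    (hirr : ∀ s : Set ι, (∀ k ∈ s, ∀ l ∉ s, P.pairing k l = 0) → s = ∅ ∨ s = Set.univ)
    (i₀ i : ι) :
    P.RootForm (P.root i) (P.root i) = P.RootForm (P.root i₀) (P.root i₀) := by
  set q := P.RootForm (P.root i₀) (P.root i₀)
  set s : Set ι := {j | P.RootForm (P.root j) (P.root j) = q} with hs
  have key : ∀ k ∈ s, ∀ l ∉ s, P.pairing k l = 0 := by
    intro k hk l hl
    by_contra hne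
    apply hl
    have h1 := aux_rootForm_coroot' P l (P.root k)
    have h2 := aux_rootForm_coroot' P k (P.root l)
    rw [root_coroot'_eq_pairing] at h1 h2
    have hsym : P.RootForm (P.root l) (P.root k) = P.RootForm (P.root k) (P.root l) := by
      simpa using (P.rootForm_symmetric.eq (P.root l) (P.root k))
    rw [hsl k l] at h1
    rw [hsym] at h1
    rw [← h2] at h1
    have : P.RootForm (P.root l) (P.root l) = P.RootForm (P.root k) (P.root k) :=
      mul_right_cancel₀ (by rw [hsl l k]; exact hne) h1
    rw [hs, Set.mem_setOf_eq, this]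
    exact hk
  have hi0 : i₀ ∈ s := by simp [hs, q]
  rcases hirr s key with h | h
  · rw [h] at hi0; exact absurd hi0 (Set.notMem_empty i₀)
  · have : i ∈ s := h ▸ Set.mem_univ i
    exact this

lemma aux_q_coroot' (hsl : ∀ k l : ι, P.pairing k l = P.pairing l k)
    (hirr : ∀ s : Set ι, (∀ k ∈ s, ∀ l ∉ s, P.pairing k l = 0) → s = ∅ ∨ s = Set.univ)
    (i₀ i : ι) (x : M) :
    P.RootForm (P.root i₀) (P.root i₀) * P.coroot' i x = 2 * P.RootForm (P.root i) x := by
  rw [← aux_length_eq P hsl hirr i₀ i]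
  exact aux_rootForm_coroot' P i x

lemma aux_trace_smulRight [Module.Finite ℝ M] (f : Module.Dual ℝ M) (m : M) :
    LinearMap.trace ℝ M (f.smulRight m) = f m := by
  have h : f.smulRight m = dualTensorHom ℝ M M (f ⊗ₜ m) := by
    ext x; simp [dualTensorHom_apply]
  rw [h, LinearMap.trace_eq_contract_apply]
  simp

lemma aux_scalar (hspan : Submodule.span ℝ (Set.range P.root) = ⊤)
    (hsl : ∀ k l : ι, P.pairing k l = P.pairing l k)
    (hirr : ∀ s : Set ι, (∀ k ∈ s, ∀ l ∉ s, P.pairing k l = 0) → s = ∅ ∨ s = Set.univ)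
    (i₀ : ι) (x : M) :
    P.RootForm (P.root i₀) (P.root i₀) • x = (2:ℝ) • ∑ i, P.coroot' i x • P.root i := by
  set q := P.RootForm (P.root i₀) (P.root i₀) with hq
  set y : M := q • x - (2:ℝ) • ∑ i, P.coroot' i x • P.root i with hy
  have hBy : ∀ z : M, P.RootForm y z = 0 := by
    intro z
    have h1 : P.RootForm y z = q * P.RootForm x z
        - 2 * ∑ i, P.coroot' i x * P.RootForm (P.root i) z := by
      simp [hy, map_sub, map_smul, map_sum, Finset.mul_sum, mul_assoc]
    rw [h1]
    have h2 : ∀ i, P.coroot' i x * (2 * P.RootForm (P.root i) z)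
        = P.coroot' i x * (q * P.coroot' i z) := by
      intro i; rw [aux_q_coroot' P hsl hirr i₀ i z]
    have h3 : ∑ i, P.coroot' i x * P.RootForm (P.root i) z
        = ∑ i, P.coroot' i x * P.coroot' i z * (q / 2) := by
      apply Finset.sum_congr rfl
      intro i _
      have := h2 i
      nlinarith [h2 i]
    rw [h3, ← Finset.sum_mul, ← rootForm_apply_apply]
    ring
  have hy0 : y = 0 := by
    by_contra hne
    have hmem : y ∈ P.rootSpan ℝ := by rw [RootPairing.rootSpan, hspan]; trivial
    have := P.rootForm_pos_of_ne_zero hmem hne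
    rw [hBy y] at this
    exact lt_irrefl 0 this
  exact sub_eq_zero.mp hy0

lemma aux_finite (hspan : Submodule.span ℝ (Set.range P.root) = ⊤) :
    Module.Finite ℝ M := by
  rw [Module.finite_def]
  exact ⟨(Set.finite_range P.root).toFinset, by simpa using hspan⟩

lemma aux_trace_eq (hspan : Submodule.span ℝ (Set.range P.root) = ⊤)
    (hsl : ∀ k l : ι, P.pairing k l = P.pairing l k)
    (hirr : ∀ s : Set ι, (∀ k ∈ s, ∀ l ∉ s, P.pairing k l = 0) → s = ∅ ∨ s = Set.univ)
    (i₀ : ι) :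
    P.RootForm (P.root i₀) (P.root i₀) * (Module.finrank ℝ M : ℝ)
      = 4 * (Fintype.card ι : ℝ) := by
  have : Module.Finite ℝ M := aux_finite P hspan
  set q := P.RootForm (P.root i₀) (P.root i₀) with hq
  set E : M →ₗ[ℝ] M := ∑ i, (P.coroot' i).smulRight (P.root i) with hE
  have hEq : (q • LinearMap.id : M →ₗ[ℝ] M) = (2:ℝ) • E := by
    ext x
    simpa [hE, LinearMap.sum_apply] using aux_scalar P hspan hsl hirr i₀ x
  have h1 : LinearMap.trace ℝ M (q • LinearMap.id) = q * (Module.finrank ℝ M : ℝ) := by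
    rw [map_smul, LinearMap.trace_id]; simp
  have h2 : LinearMap.trace ℝ M ((2:ℝ) • E) = 2 * (2 * (Fintype.card ι : ℝ)) := by
    rw [map_smul, hE, map_sum]
    simp only [aux_trace_smulRight, root_coroot'_eq_pairing, pairing_same]
    simp [Finset.sum_const, mul_comm]
  rw [hEq, h2] at h1
  rw [← h1]; ring

lemma aux_pairing_vals (hspan : Submodule.span ℝ (Set.range P.root) = ⊤)
    (hsl : ∀ k l : ι, P.pairing k l = P.pairing l k)
    (hirr : ∀ s : Set ι, (∀ k ∈ s, ∀ l ∉ s, P.pairing k l = 0) → s = ∅ ∨ s = Set.univ)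
    (i₀ i : ι) :
    P.pairing i i₀ ^ 2 ≤ 4 ∧ (P.pairing i i₀ = 2 → i = i₀) ∧
      (P.pairing i i₀ = -2 → i = P.reflectionPerm i₀ i₀) := by
  set q := P.RootForm (P.root i₀) (P.root i₀) with hqdef
  set c := P.pairing i i₀ with hcdef
  set b := P.RootForm (P.root i) (P.root i₀) with hbdef
  have hq0 : 0 < q := P.rootForm_pos_of_ne_zero (Submodule.subset_span (Set.mem_range_self i₀)) (P.ne_zero i₀)
  have hii : P.RootForm (P.root i) (P.root i) = q := aux_length_eq P hsl hirr i₀ i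
  have hsym : P.RootForm (P.root i₀) (P.root i) = b := by
    rw [hbdef]; simpa using (P.rootForm_symmetric.eq (P.root i) (P.root i₀)).symm
  have hcb : q * c = 2 * b := by
    have := aux_q_coroot' P hsl hirr i₀ i₀ (P.root i)
    rw [root_coroot'_eq_pairing, hsym] at this
    exact this
  set v : M := q • P.root i - b • P.root i₀ with hv
  have hvv : P.RootForm v v = q * (q * q - b * b) := by
    simp only [hv, map_sub, map_smul, LinearMap.sub_apply, LinearMap.smul_apply, smul_eq_mul]
    rw [hii, hsym, hbdef]
    ring
  have hvv0 : 0 ≤ P.RootForm v v := P.zero_le_rootForm v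
  have hb2 : b * b ≤ q * q := by nlinarith
  have heq : ∀ b', b = b' * q → v = 0 → P.root i = b' • P.root i₀ := by
    intro b' hb' h0
    have : q • P.root i = q • (b' • P.root i₀) := by
      have h1 := sub_eq_zero.mp h0
      rw [h1, hb', smul_smul]; congr 1; ring
    exact smul_right_injective M (ne_of_gt hq0) this
  constructor
  · have h5 : q * q * (c ^ 2) = 4 * (b * b) := by
      have h := congrArg (fun t => t * t) hcb
      beta_reduce at h
      linear_combination h
    have h4 : q * q * (c ^ 2) ≤ q * q * 4 := by linarith [hb2, h5]
    exact (mul_le_mul_iff_right₀ (mul_pos hq0 hq0)).mp h4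
  constructor
  · intro hc2
    have hbq : b = q := by rw [hc2] at hcb; linarith
    have hv0 : v = 0 := by
      by_contra hne
      have hmem : v ∈ P.rootSpan ℝ := by rw [RootPairing.rootSpan, hspan]; trivial
      have := P.rootForm_pos_of_ne_zero hmem hne
      rw [hvv, hbq] at this
      nlinarith
    have := heq 1 (by rw [hbq, one_mul]) hv0
    rw [one_smul] at this
    exact P.root.injective this
  · intro hc2
    have hbq : b = -q := by rw [hc2] at hcb; linarith
    have hv0 : v = 0 := by
      by_contra hne
      have hmem : v ∈ P.rootSpan ℝ := by rw [RootPairing.rootSpan, hspan]; trivial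
      have := P.rootForm_pos_of_ne_zero hmem hne
      rw [hvv, hbq] at this
      nlinarith
    have := heq (-1) (by rw [hbq]; ring) hv0
    rw [neg_one_smul] at this
    apply P.root.injective
    rw [this, root_reflectionPerm, reflection_apply_self]

end Aux

/-- Proposition 7.1(b) of the paper: let `Δ` be the set of roots of a finite, irreducible,
crystallographic, reduced, simply-laced root system over `ℝ`, `n = dim M` its rank, and `θ` any
root with coroot `θ∨`.  Then `n · #{α ∈ Δ : ⟨α,θ∨⟩ = 1} = 2·|Δ| − 4n` and
`n · #{α ∈ Δ : ⟨α,θ∨⟩ = 0} = n·|Δ| − 4·|Δ| + 6n`; equivalently, writing `|Δ| = n·h∨`, there are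
`2(h∨−2)` roots pairing to `1` with `θ∨` and `n·h∨ − 4h∨ + 6` roots orthogonal to `θ∨`. -/
theorem card_roots_pairing_one_and_zero
    {ι M N : Type*} [Fintype ι]
    [AddCommGroup M] [Module ℝ M] [AddCommGroup N] [Module ℝ N]
    (P : RootPairing ι ℝ M N)
    (hspan : Submodule.span ℝ (Set.range P.root) = ⊤)
    (hcr : P.IsCrystallographic) (hred : P.IsReduced)
    (hsl : ∀ k l : ι, P.pairing k l = P.pairing l k)
    (hirr : ∀ s : Set ι, (∀ k ∈ s, ∀ l ∉ s, P.pairing k l = 0) →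
      s = ∅ ∨ s = Set.univ)
    (i₀ : ι) :
    (Module.finrank ℝ M : ℤ) *
        ({α ∈ Set.range P.root | P.coroot' i₀ α = 1}.ncard : ℤ) =
      2 * ((Set.range P.root).ncard : ℤ) - 4 * (Module.finrank ℝ M : ℤ) ∧
    (Module.finrank ℝ M : ℤ) *
        ({α ∈ Set.range P.root | P.coroot' i₀ α = 0}.ncard : ℤ) =
      (Module.finrank ℝ M : ℤ) * ((Set.range P.root).ncard : ℤ)
        - 4 * ((Set.range P.root).ncard : ℤ) + 6 * (Module.finrank ℝ M : ℤ) := by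
  classical
  set n := Module.finrank ℝ M with hn
  set K := Fintype.card ι with hK
  set c : ι → ℝ := fun i => P.pairing i i₀ with hc
  set j₀ := P.reflectionPerm i₀ i₀ with hj₀
  -- basic facts about c
  have hci₀ : c i₀ = 2 := P.pairing_same i₀
  have hcj₀ : c j₀ = -2 := by
    show P.pairing j₀ i₀ = -2
    rw [hj₀, P.pairing_reflectionPerm_self_left i₀ i₀, P.pairing_same]
  have hcν : ∀ i, c (P.reflectionPerm i i) = - c i :=
    fun i => P.pairing_reflectionPerm_self_left i i₀
  have hνν : ∀ i : ι, P.reflectionPerm (P.reflectionPerm i i) (P.reflectionPerm i i) = i := by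
    intro i
    apply P.root.injective
    rw [root_reflectionPerm, reflection_apply_self, root_reflectionPerm,
      reflection_apply_self, neg_neg]
  -- finsets
  set F1 := Finset.univ.filter (fun i => c i = 1) with hF1
  set Fm1 := Finset.univ.filter (fun i => c i = -1) with hFm1
  set F0 := Finset.univ.filter (fun i => c i = 0) with hF0
  set p := F1.card with hp
  set z := F0.card with hz
  have hpp' : Fm1.card = p := by
    rw [hp]
    apply Finset.card_bij' (fun i _ => P.reflectionPerm i i) (fun i _ => P.reflectionPerm i i)
    · intro a ha
      have ha' : c a = -1 := by simpa [hFm1] using ha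
      simp [hF1, hcν a, ha']
    · intro a ha
      have ha' : c a = 1 := by simpa [hF1] using ha
      simp [hFm1, hcν a, ha']
    · intro a _; exact hνν a
    · intro a _; exact hνν a
  -- pointwise classification
  have hvals := fun i => aux_pairing_vals P hspan hsl hirr i₀ i
  have hint : ∀ i, ∃ m : ℤ, (m : ℝ) = c i := fun i => by
    haveI := hcr; obtain ⟨m, hm⟩ := P.exists_value (S := ℤ) i i₀; exact ⟨m, by simpa using hm⟩
  have hkey : ∀ i : ι, c i ^ 2 =
      (if i = i₀ then (4:ℝ) else 0) + (if i = j₀ then (4:ℝ) else 0)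
        + (if c i = 1 then (1:ℝ) else 0) + (if c i = -1 then (1:ℝ) else 0) := by
    intro i
    obtain ⟨m, hm⟩ := hint i
    have hle : c i ^ 2 ≤ 4 := (hvals i).1
    have hm4 : m ^ 2 ≤ 4 := by
      have : ((m:ℝ)) ^ 2 ≤ 4 := by rw [hm]; exact hle
      exact_mod_cast this
    obtain ⟨hmb1, hmb2⟩ : -2 ≤ m ∧ m ≤ 2 := by constructor <;> nlinarith
    have hcm : c i = (m : ℝ) := hm.symm
    interval_cases m
    · -- m = -2
      have hceq : c i = -2 := by rw [hcm]; norm_num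
      have hi : i = j₀ := (hvals i).2.2 hceq
      have h1 : i ≠ i₀ := by
        intro h; rw [h, hci₀] at hceq; norm_num at hceq
      rw [if_neg h1, if_pos hi, hceq]
      norm_num
    · -- m = -1
      have hceq : c i = -1 := by rw [hcm]; norm_num
      have h1 : i ≠ i₀ := by intro h; rw [h, hci₀] at hceq; norm_num at hceq
      have h2 : i ≠ j₀ := by intro h; rw [h, hcj₀] at hceq; norm_num at hceq
      rw [if_neg h1, if_neg h2, hceq]
      norm_num
    · -- m = 0
      have hceq : c i = 0 := by rw [hcm]; norm_num
      have h1 : i ≠ i₀ := by intro h; rw [h, hci₀] at hceq; norm_num at hceq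
      have h2 : i ≠ j₀ := by intro h; rw [h, hcj₀] at hceq; norm_num at hceq
      rw [if_neg h1, if_neg h2, hceq]
      norm_num
    · -- m = 1
      have hceq : c i = 1 := by rw [hcm]; norm_num
      have h1 : i ≠ i₀ := by intro h; rw [h, hci₀] at hceq; norm_num at hceq
      have h2 : i ≠ j₀ := by intro h; rw [h, hcj₀] at hceq; norm_num at hceq
      rw [if_neg h1, if_neg h2, hceq]
      norm_num
    · -- m = 2
      have hceq : c i = 2 := by rw [hcm]; norm_num
      have hi : i = i₀ := (hvals i).2.1 hceq
      have h2 : i ≠ j₀ := by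
        intro h; rw [h, hcj₀] at hceq; norm_num at hceq
      rw [if_pos hi, if_neg h2, hceq]
      norm_num
  -- q = sum of squares
  have hqsum : P.RootForm (P.root i₀) (P.root i₀) = ∑ i, c i ^ 2 := by
    rw [P.rootForm_root_self i₀]
    apply Finset.sum_congr rfl
    intro i _
    rw [hsl i₀ i]
    ring
  have hsum : ∑ i, c i ^ 2 = 8 + (p : ℝ) + (Fm1.card : ℝ) := by
    rw [Finset.sum_congr rfl (fun i _ => hkey i)]
    rw [Finset.sum_add_distrib, Finset.sum_add_distrib, Finset.sum_add_distrib]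
    rw [Finset.sum_ite_eq' Finset.univ i₀ (fun _ => (4:ℝ)),
      Finset.sum_ite_eq' Finset.univ j₀ (fun _ => (4:ℝ))]
    rw [Finset.sum_boole, Finset.sum_boole]
    simp [hp, hF1, hFm1]
    ring
  have hcount : (K : ℝ) = 2 + (p : ℝ) + (Fm1.card : ℝ) + (z : ℝ) := by
    have hone : ∀ i : ι, (1:ℝ) =
        (if i = i₀ then (1:ℝ) else 0) + (if i = j₀ then (1:ℝ) else 0)
          + (if c i = 1 then (1:ℝ) else 0) + (if c i = -1 then (1:ℝ) else 0)
          + (if c i = 0 then (1:ℝ) else 0) := by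
      intro i
      obtain ⟨m, hm⟩ := hint i
      have hle : c i ^ 2 ≤ 4 := (hvals i).1
      have hm4 : m ^ 2 ≤ 4 := by
        have : ((m:ℝ)) ^ 2 ≤ 4 := by rw [hm]; exact hle
        exact_mod_cast this
      obtain ⟨hmb1, hmb2⟩ : -2 ≤ m ∧ m ≤ 2 := by constructor <;> nlinarith
      have hcm : c i = (m : ℝ) := hm.symm
      interval_cases m
      · have hceq : c i = -2 := by rw [hcm]; norm_num
        have hi : i = j₀ := (hvals i).2.2 hceq
        have h1 : i ≠ i₀ := by intro h; rw [h, hci₀] at hceq; norm_num at hceq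
        rw [if_neg h1, if_pos hi, hceq]; norm_num
      · have hceq : c i = -1 := by rw [hcm]; norm_num
        have h1 : i ≠ i₀ := by intro h; rw [h, hci₀] at hceq; norm_num at hceq
        have h2 : i ≠ j₀ := by intro h; rw [h, hcj₀] at hceq; norm_num at hceq
        rw [if_neg h1, if_neg h2, hceq]; norm_num
      · have hceq : c i = 0 := by rw [hcm]; norm_num
        have h1 : i ≠ i₀ := by intro h; rw [h, hci₀] at hceq; norm_num at hceq
        have h2 : i ≠ j₀ := by intro h; rw [h, hcj₀] at hceq; norm_num at hceq
        rw [if_neg h1, if_neg h2, hceq]; norm_num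
      · have hceq : c i = 1 := by rw [hcm]; norm_num
        have h1 : i ≠ i₀ := by intro h; rw [h, hci₀] at hceq; norm_num at hceq
        have h2 : i ≠ j₀ := by intro h; rw [h, hcj₀] at hceq; norm_num at hceq
        rw [if_neg h1, if_neg h2, hceq]; norm_num
      · have hceq : c i = 2 := by rw [hcm]; norm_num
        have hi : i = i₀ := (hvals i).2.1 hceq
        have h2 : i ≠ j₀ := by intro h; rw [h, hcj₀] at hceq; norm_num at hceq
        rw [if_pos hi, if_neg h2, hceq]; norm_num
    have : ∑ _i : ι, (1:ℝ) = (K : ℝ) := by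
      rw [Finset.sum_const]; simp [hK]
    rw [← this, Finset.sum_congr rfl (fun i _ => hone i)]
    rw [Finset.sum_add_distrib, Finset.sum_add_distrib, Finset.sum_add_distrib,
      Finset.sum_add_distrib]
    rw [Finset.sum_ite_eq' Finset.univ i₀ (fun _ => (1:ℝ)),
      Finset.sum_ite_eq' Finset.univ j₀ (fun _ => (1:ℝ))]
    rw [Finset.sum_boole, Finset.sum_boole, Finset.sum_boole]
    simp [hp, hz, hF1, hFm1, hF0]
    ring
  -- trace identity
  have htr := aux_trace_eq P hspan hsl hirr i₀
  -- real equations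
  have hreal1 : (n : ℝ) * (8 + 2 * (p : ℝ)) = 4 * (K : ℝ) := by
    rw [← htr, hqsum, hsum, hpp']
    ring
  -- integer versions
  have hZ1 : 8 * (n : ℤ) + 2 * ((n:ℤ) * (p:ℤ)) = 4 * (K : ℤ) := by
    have : (8 * (n : ℝ) + 2 * ((n:ℝ) * (p:ℝ)) : ℝ) = 4 * (K : ℝ) := by linarith [hreal1]
    exact_mod_cast this
  have hZ2 : (K : ℤ) = 2 + 2 * (p : ℤ) + (z : ℤ) := by
    have : (K : ℝ) = 2 + 2 * (p : ℝ) + (z : ℝ) := by rw [hcount, hpp']; ring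
    exact_mod_cast this
  -- translate set cardinalities
  have himg1 : {α ∈ Set.range P.root | P.coroot' i₀ α = 1} = P.root '' {i | c i = 1} := by
    ext α
    constructor
    · rintro ⟨⟨i, rfl⟩, h1⟩
      refine ⟨i, ?_, rfl⟩
      show P.pairing i i₀ = 1
      rwa [← P.root_coroot'_eq_pairing]
    · rintro ⟨i, hi, rfl⟩
      refine ⟨⟨i, rfl⟩, ?_⟩
      have h2 : P.pairing i i₀ = 1 := hi
      rwa [P.root_coroot'_eq_pairing]
  have himg0 : {α ∈ Set.range P.root | P.coroot' i₀ α = 0} = P.root '' {i | c i = 0} := by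
    ext α
    constructor
    · rintro ⟨⟨i, rfl⟩, h1⟩
      refine ⟨i, ?_, rfl⟩
      show P.pairing i i₀ = 0
      rwa [← P.root_coroot'_eq_pairing]
    · rintro ⟨i, hi, rfl⟩
      refine ⟨⟨i, rfl⟩, ?_⟩
      have h2 : P.pairing i i₀ = 0 := hi
      rwa [P.root_coroot'_eq_pairing]
  have hs1 : {i | c i = 1} = (F1 : Set ι) := by ext i; simp [hF1]
  have hs0 : {i | c i = 0} = (F0 : Set ι) := by ext i; simp [hF0]
  have hn1 : {α ∈ Set.range P.root | P.coroot' i₀ α = 1}.ncard = p := by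
    rw [himg1, Set.ncard_image_of_injective _ P.root.injective, hs1, Set.ncard_coe_finset]
  have hn0 : {α ∈ Set.range P.root | P.coroot' i₀ α = 0}.ncard = z := by
    rw [himg0, Set.ncard_image_of_injective _ P.root.injective, hs0, Set.ncard_coe_finset]
  have hnΔ : (Set.range P.root).ncard = K := by
    rw [← Set.image_univ, Set.ncard_image_of_injective _ P.root.injective, Set.ncard_univ,
      Nat.card_eq_fintype_card]
  rw [hn1, hn0, hnΔ]
  constructor
  · linarith [hZ1, hZ2]
  · have hZ3 : (n:ℤ) * (K:ℤ) = 2 * (n:ℤ) + 2 * ((n:ℤ) * (p:ℤ)) + (n:ℤ) * (z:ℤ) := by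
      linear_combination (n : ℤ) * hZ2
    linarith [hZ1, hZ3]
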